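/- Let (X, dist) be a metric space, let Y ⊆ X have diameter at most 1, let z ≥ 1 and k, k' ≥ 1 be integers, let α > 0, e ≥ 0, M ≥ 0, A ≥ 0 and M' ≥ 0 be reals. Let P be a finite multiset of points of Y, let S = {s_1, …, s_{k'}} ⊆ Y, and let P = P_1 ⊔ … ⊔ P_{k'} be a partition of P into Voronoi clusters of S, i.e., dist(p, s_i) = dist(p, S) for every i and every p ∈ P_i. Let Γ* ⊆ Y be a set with |Γ*| = k such that cost_z(P, S) ≤ M·cost_z(P, Γ*) + A. Let n_1, …, n_{k'} ≥ 0 be reals with |n_i − |P_i|| ≤ e for each i, and let C ⊆ Y with |C| = k satisfy ∑_i n_i·dist(s_i, C)^z ≤ M'·∑_i n_i·dist(s_i, Γ*)^z. Then cost_z(P, C) ≤ (1+1/α)^{z−1}·(1 + (1+α)^{z−1}·M')·(M·cost_z(P, Γ*) + A) + (1+α)^{2(z−1)}·M'·cost_z(P, Γ*) + (1+α)^{z−1}·(M'+1)·k'·e. -/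

import Mathlib

open Metric Set

private lemma key_pow (z : ℕ) (hz : 1 ≤ z) (α : ℝ) (hα : 0 < α) (a b : ℝ)
    (ha : 0 ≤ a) (hb : 0 ≤ b) :
    (a + b) ^ z ≤ (1 + 1/α) ^ (z-1) * a ^ z + (1 + α) ^ (z-1) * b ^ z := by
  obtain ⟨w, rfl⟩ : ∃ w, z = w + 1 := ⟨z - 1, (Nat.sub_add_cancel hz).symm⟩
  have h1α : (0:ℝ) < 1 + α := by linarith
  set lam : ℝ := α / (1 + α) with hlam
  set mu : ℝ := 1 / (1 + α) with hmu
  have hlam0 : 0 < lam := div_pos hα h1α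
  have hmu0 : 0 < mu := div_pos one_pos h1α
  have hsum : lam + mu = 1 := by rw [hlam, hmu]; field_simp; ring
  have hc := (convexOn_pow (𝕜 := ℝ) (w+1)).2 (mem_Ici.2 (div_nonneg ha hlam0.le))
    (mem_Ici.2 (div_nonneg hb hmu0.le)) hlam0.le hmu0.le hsum
  simp only [smul_eq_mul] at hc
  rw [mul_div_cancel₀ a hlam0.ne', mul_div_cancel₀ b hmu0.ne'] at hc
  have e1 : lam * (a / lam) ^ (w+1) = (1 + 1/α) ^ w * a ^ (w+1) := by
    rw [div_pow, pow_succ, pow_succ]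
    rw [hlam]
    have h1 : (1:ℝ) + 1/α = (1 + α)/α := by field_simp; ring
    rw [h1]
    field_simp
    rw [mul_assoc (a ^ w * a), ← mul_pow,
      show α / (1 + α) * ((1 + α) / α) = 1 by field_simp, one_pow, mul_one]
  have e2 : mu * (b / mu) ^ (w+1) = (1 + α) ^ w * b ^ (w+1) := by
    rw [div_pow, pow_succ, pow_succ, hmu]
    field_simp
    rw [mul_assoc (b ^ w * b), ← mul_pow, one_div_mul_cancel h1α.ne', one_pow, mul_one]
  rw [e1, e2] at hc
  exact hc

/-- **From bi-criteria to proper solutions.** Let `Y` be a subset of a metric space `X`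
of diameter at most `1`, let `z ≥ 1`, `k, k' ≥ 1` be integers, `α > 0`, and
`e, M, A, M' ≥ 0`.  Let `P = P_1 ⊔ … ⊔ P_{k'}` be a finite multiset of points of `Y`
partitioned into the Voronoi clusters of the centers `S = {s_1, …, s_{k'}} ⊆ Y` (i.e.
`dist(p, s_i) = dist(p, S)` for every `p ∈ P_i`).  Let `Γ* ⊆ Y` with `|Γ*| = k` satisfy
`cost_z(P, S) ≤ M·cost_z(P, Γ*) + A`, let `n_1, …, n_{k'} ≥ 0` be reals with
`|n_i − |P_i|| ≤ e`, and let `C ⊆ Y` with `|C| = k` satisfy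
`∑_i n_i·dist(s_i, C)^z ≤ M'·∑_i n_i·dist(s_i, Γ*)^z`.  Then
`cost_z(P, C) ≤ (1+1/α)^{z−1}·(1 + (1+α)^{z−1}·M')·(M·cost_z(P, Γ*) + A)
  + (1+α)^{2(z−1)}·M'·cost_z(P, Γ*) + (1+α)^{z−1}·(M'+1)·k'·e`. -/
theorem bicriteria_to_proper {X : Type*} [MetricSpace X] (Y : Set X)
    (hY : ∀ x ∈ Y, ∀ y ∈ Y, dist x y ≤ 1)
    (z k k' : ℕ) (hz : 1 ≤ z) (hk : 1 ≤ k) (hk' : 1 ≤ k')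
    (α : ℝ) (hα : 0 < α)
    (e M A M' : ℝ) (he : 0 ≤ e) (hM : 0 ≤ M) (hA : 0 ≤ A) (hM' : 0 ≤ M')
    (Pi : Fin k' → Multiset X) (hPY : ∀ i, ∀ p ∈ Pi i, p ∈ Y)
    (s : Fin k' → X) (hs : ∀ i, s i ∈ Y)
    (hVoronoi : ∀ i, ∀ p ∈ Pi i, dist p (s i) = Metric.infDist p (Set.range s))
    (Γstar : Finset X) (hΓY : ↑Γstar ⊆ Y) (hΓcard : Γstar.card = k)
    (hScost : ((∑ i, Pi i).map (fun p => Metric.infDist p (Set.range s) ^ z)).sum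
        ≤ M * ((∑ i, Pi i).map
            (fun p => Metric.infDist p (↑Γstar : Set X) ^ z)).sum + A)
    (n : Fin k' → ℝ) (hn0 : ∀ i, 0 ≤ n i)
    (hne : ∀ i, |n i - ((Pi i).card : ℝ)| ≤ e)
    (C : Finset X) (hCY : ↑C ⊆ Y) (hCcard : C.card = k)
    (hC : ∑ i, n i * Metric.infDist (s i) (↑C : Set X) ^ z
        ≤ M' * ∑ i, n i * Metric.infDist (s i) (↑Γstar : Set X) ^ z) :
    ((∑ i, Pi i).map (fun p => Metric.infDist p (↑C : Set X) ^ z)).sum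
      ≤ (1 + 1 / α) ^ (z - 1) * (1 + (1 + α) ^ (z - 1) * M')
            * (M * ((∑ i, Pi i).map
                (fun p => Metric.infDist p (↑Γstar : Set X) ^ z)).sum + A)
        + (1 + α) ^ (2 * (z - 1)) * M'
            * ((∑ i, Pi i).map
                (fun p => Metric.infDist p (↑Γstar : Set X) ^ z)).sum
        + (1 + α) ^ (z - 1) * (M' + 1) * k' * e := by
  -- split the big multiset sums into per-cluster sums
  have msplit : ∀ f : X → ℝ,
      ((∑ i, Pi i).map f).sum = ∑ i, ((Pi i).map f).sum := by
    intro f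
    induction (Finset.univ : Finset (Fin k')) using Finset.induction with
    | empty => simp
    | insert _ _ h ih => simp [Finset.sum_insert h, ih]
  rw [msplit, msplit] at hScost ⊢
  rw [mul_comm 2 (z - 1), pow_mul]
  set B : ℝ := (1 + 1/α) ^ (z - 1) with hBdef
  set G : ℝ := (1 + α) ^ (z - 1) with hGdef
  have h1α : (0:ℝ) < 1 + α := by linarith
  have hB : 0 ≤ B := by positivity
  have hG : 0 ≤ G := by positivity
  -- abbreviations
  set Si : Fin k' → ℝ := fun i => ((Pi i).map (fun p => infDist p (Set.range s) ^ z)).sum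
    with hSi
  set Gi : Fin k' → ℝ := fun i => ((Pi i).map (fun p => infDist p (↑Γstar : Set X) ^ z)).sum
    with hGi
  set costS : ℝ := ∑ i, Si i with hcostS
  set costΓ : ℝ := ∑ i, Gi i with hcostΓ
  set dC : Fin k' → ℝ := fun i => infDist (s i) (↑C : Set X) with hdC
  set dΓ : Fin k' → ℝ := fun i => infDist (s i) (↑Γstar : Set X) with hdΓ
  -- nonemptiness and diameter bounds
  have hCne : C.Nonempty := Finset.card_pos.1 (by omega)
  have hΓne : Γstar.Nonempty := Finset.card_pos.1 (by omega)
  obtain ⟨c0, hc0⟩ := hCne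
  obtain ⟨g0, hg0⟩ := hΓne
  have hdC1 : ∀ i, dC i ^ z ≤ 1 := by
    intro i
    have h1 : dC i ≤ 1 := by
      have := infDist_le_dist_of_mem (x := s i) (Finset.mem_coe.2 hc0)
      have h2 : dist (s i) c0 ≤ 1 := hY _ (hs i) _ (hCY hc0)
      simp only [hdC]; linarith
    exact pow_le_one₀ infDist_nonneg h1
  have hdΓ1 : ∀ i, dΓ i ^ z ≤ 1 := by
    intro i
    have h1 : dΓ i ≤ 1 := by
      have := infDist_le_dist_of_mem (x := s i) (Finset.mem_coe.2 hg0)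
      have h2 : dist (s i) g0 ≤ 1 := hY _ (hs i) _ (hΓY hg0)
      simp only [hdΓ]; linarith
    exact pow_le_one₀ infDist_nonneg h1
  have hdC0 : ∀ i, 0 ≤ dC i ^ z := fun i => pow_nonneg infDist_nonneg z
  have hdΓ0 : ∀ i, 0 ≤ dΓ i ^ z := fun i => pow_nonneg infDist_nonneg z
  set T1 : ℝ := ∑ i, ((Pi i).card : ℝ) * dC i ^ z with hT1
  set T2 : ℝ := ∑ i, n i * dC i ^ z with hT2
  set T3 : ℝ := ∑ i, n i * dΓ i ^ z with hT3
  set T4 : ℝ := ∑ i, ((Pi i).card : ℝ) * dΓ i ^ z with hT4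
  -- Step 1
  have H1 : (∑ i, ((Pi i).map (fun p => infDist p (↑C : Set X) ^ z)).sum)
      ≤ B * costS + G * T1 := by
    have h1i : ∀ i, ((Pi i).map (fun p => infDist p (↑C : Set X) ^ z)).sum
        ≤ B * Si i + G * (((Pi i).card : ℝ) * dC i ^ z) := by
      intro i
      calc ((Pi i).map (fun p => infDist p (↑C : Set X) ^ z)).sum
          ≤ ((Pi i).map (fun p => B * infDist p (Set.range s) ^ z + G * dC i ^ z)).sum := by
            apply Multiset.sum_map_le_sum_map
            intro p hp
            have hd : infDist p (↑C : Set X) ≤ dist p (s i) + dC i := by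
              have := infDist_le_infDist_add_dist (x := p) (y := s i) (s := (↑C : Set X))
              simp only [hdC]; linarith
            have hp1 : infDist p (↑C : Set X) ^ z ≤ (dist p (s i) + dC i) ^ z :=
              pow_le_pow_left₀ infDist_nonneg hd z
            have hp2 := key_pow z hz α hα (dist p (s i)) (dC i) dist_nonneg infDist_nonneg
            have := hp1.trans hp2
            rwa [hVoronoi i p hp] at this
        _ = B * Si i + G * (((Pi i).card : ℝ) * dC i ^ z) := by
            rw [Multiset.sum_map_add, Multiset.sum_map_mul_left]
            simp [Multiset.map_const', Multiset.sum_replicate, hSi]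
            ring
    calc (∑ i, ((Pi i).map (fun p => infDist p (↑C : Set X) ^ z)).sum)
        ≤ ∑ i, (B * Si i + G * (((Pi i).card : ℝ) * dC i ^ z)) :=
          Finset.sum_le_sum fun i _ => h1i i
      _ = B * costS + G * T1 := by
          rw [Finset.sum_add_distrib, ← Finset.mul_sum, ← Finset.mul_sum]
  -- Step 2
  have H2 : T1 ≤ T2 + k' * e := by
    have : ∀ i ∈ Finset.univ, ((Pi i).card : ℝ) * dC i ^ z ≤ n i * dC i ^ z + e := by
      intro i _
      have hb := abs_le.1 (hne i)
      nlinarith [hdC0 i, hdC1 i]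
    calc T1 ≤ ∑ i, (n i * dC i ^ z + e) := Finset.sum_le_sum this
      _ = T2 + k' * e := by
          rw [Finset.sum_add_distrib, Finset.sum_const, Finset.card_univ, Fintype.card_fin,
            nsmul_eq_mul]
  -- Step 4
  have H4 : T3 ≤ T4 + k' * e := by
    have : ∀ i ∈ Finset.univ, n i * dΓ i ^ z ≤ ((Pi i).card : ℝ) * dΓ i ^ z + e := by
      intro i _
      have hb := abs_le.1 (hne i)
      nlinarith [hdΓ0 i, hdΓ1 i]
    calc T3 ≤ ∑ i, (((Pi i).card : ℝ) * dΓ i ^ z + e) := Finset.sum_le_sum this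
      _ = T4 + k' * e := by
          rw [Finset.sum_add_distrib, Finset.sum_const, Finset.card_univ, Fintype.card_fin,
            nsmul_eq_mul]
  -- Step 5
  have H5 : T4 ≤ B * costS + G * costΓ := by
    have h5i : ∀ i, ((Pi i).card : ℝ) * dΓ i ^ z ≤ B * Si i + G * Gi i := by
      intro i
      have hrep : ((Pi i).map (fun _ => dΓ i ^ z)).sum = ((Pi i).card : ℝ) * dΓ i ^ z := by
        simp [Multiset.map_const', Multiset.sum_replicate]
      rw [← hrep]
      calc ((Pi i).map (fun _ => dΓ i ^ z)).sum
          ≤ ((Pi i).map (fun p => B * infDist p (Set.range s) ^ z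
              + G * infDist p (↑Γstar : Set X) ^ z)).sum := by
            apply Multiset.sum_map_le_sum_map
            intro p hp
            have hd : dΓ i ≤ dist p (s i) + infDist p (↑Γstar : Set X) := by
              have := infDist_le_infDist_add_dist (x := s i) (y := p)
                (s := (↑Γstar : Set X))
              simp only [hdΓ]
              rw [dist_comm (s i) p] at this
              linarith
            have hp1 : dΓ i ^ z ≤ (dist p (s i) + infDist p (↑Γstar : Set X)) ^ z :=
              pow_le_pow_left₀ infDist_nonneg hd z
            have hp2 := key_pow z hz α hα (dist p (s i)) (infDist p (↑Γstar : Set X))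
              dist_nonneg infDist_nonneg
            have := hp1.trans hp2
            rwa [hVoronoi i p hp] at this
        _ = B * Si i + G * Gi i := by
            rw [Multiset.sum_map_add, Multiset.sum_map_mul_left, Multiset.sum_map_mul_left]
    calc T4 ≤ ∑ i, (B * Si i + G * Gi i) := Finset.sum_le_sum fun i _ => h5i i
      _ = B * costS + G * costΓ := by
          rw [Finset.sum_add_distrib, ← Finset.mul_sum, ← Finset.mul_sum]
  -- Step 6
  have H6 : costS ≤ M * costΓ + A := hScost
  -- combine
  have q2 : G * T1 ≤ G * (T2 + k' * e) := mul_le_mul_of_nonneg_left H2 hG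
  have q3 : G * T2 ≤ G * (M' * T3) := mul_le_mul_of_nonneg_left hC hG
  have hGM' : 0 ≤ G * M' := mul_nonneg hG hM'
  have q4 : G * M' * T3 ≤ G * M' * (T4 + k' * e) := mul_le_mul_of_nonneg_left H4 hGM'
  have q5 : G * M' * T4 ≤ G * M' * (B * costS + G * costΓ) :=
    mul_le_mul_of_nonneg_left H5 hGM'
  have hcoef : 0 ≤ B + G * M' * B := by positivity
  have q6 : (B + G * M' * B) * costS ≤ (B + G * M' * B) * (M * costΓ + A) :=
    mul_le_mul_of_nonneg_left H6 hcoef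
  linarith [H1, q2, q3, q4, q5, q6]
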